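/- Let n ≥ 3. Every PCR-type cycle P of the PRR of order n other than the cycle {(0,…,0)} contains at least one state whose first and last coordinates are both 1; choose one such state sel(P) in each such cycle. Let A = { c ∈ F₂ⁿ : putting v = (c_1,…,c_{n-1},1), either (c_1 = 0 and v is the cycle representative of the (CCR-type) cycle containing v), or (c_1 = 1 and v = sel(P), where P is the (PCR-type) cycle containing v) }. Then, for every such choice of the states sel(P), the successor rule Ψ defined by Ψ(c) = c_0 + c_1 + c_{n-1} + 1 if c ∈ A and Ψ(c) = c_0 + c_1 + c_{n-1} otherwise generates a de Bruijn sequence of order n. -/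

import Mathlib

attribute [local instance] Classical.propDecidable

abbrev F2 := ZMod 2

/-- Coordinate access with default value `0` outside the range. -/
noncomputable def get {n : ℕ} (c : Fin n → F2) (j : ℕ) : F2 :=
  if h : j < n then c ⟨j, h⟩ else 0

/-- Lexicographic order on binary tuples (coordinates compared from index 0, with 0 < 1). -/
def lexLe {m : ℕ} (v w : Fin m → F2) : Prop :=
  ∀ j : Fin m, (∀ i : Fin m, i < j → v i = w i) → (v j).val ≤ (w j).val

def lexLt {m : ℕ} (v w : Fin m → F2) : Prop := lexLe v w ∧ v ≠ w

/-- Left cyclic rotation by `r`. -/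
def rot {m : ℕ} (r : ℕ) (w : Fin m → F2) : Fin m → F2 :=
  fun i => w ⟨((i : ℕ) + r) % m, Nat.mod_lt _ i.pos⟩

/-- `w` is lexicographically minimal among its cyclic rotations. -/
def IsNecklace {m : ℕ} (w : Fin m → F2) : Prop := ∀ r : ℕ, lexLe w (rot r w)

/-- `w` followed by its coordinatewise complement. -/
def complAppend {m : ℕ} (w : Fin m → F2) : Fin (2 * m) → F2 :=
  fun i => if h : (i : ℕ) < m then w ⟨(i : ℕ), h⟩
           else w ⟨(i : ℕ) - m, by have := i.isLt; omega⟩ + 1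

def IsCoNecklace {m : ℕ} (w : Fin m → F2) : Prop := IsNecklace (complAppend w)

/-- The last `n-1` coordinates of an `n`-stage state. -/
def stTail {n : ℕ} (c : Fin n → F2) : Fin (n - 1) → F2 :=
  fun i => c ⟨(i : ℕ) + 1, by have := i.isLt; omega⟩

/-- The state map of a successor rule/feedback function:
`(c_0,…,c_{n-1}) ↦ (c_1,…,c_{n-1}, ρ(c))`. -/
def nextMap {n : ℕ} (ρ : (Fin n → F2) → F2) (c : Fin n → F2) : Fin n → F2 :=
  fun i => if h : (i : ℕ) + 1 < n then c ⟨(i : ℕ) + 1, h⟩ else ρ c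

/-- Feedback of the pure run-length register: `c_0 + c_1 + c_{n-1}`. -/
noncomputable def fPRR {n : ℕ} (c : Fin n → F2) : F2 :=
  get c 0 + get c 1 + get c (n - 1)

/-- The successor rule `ρ` generates a de Bruijn sequence of order `n`,
i.e. all `2^n` states lie in a single orbit of its state map. -/
def generatesDB {n : ℕ} (ρ : (Fin n → F2) → F2) : Prop :=
  ∀ x y : Fin n → F2, ∃ k : ℕ, (nextMap ρ)^[k] x = y

def inOrbit {α : Type*} (σ : α → α) (v w : α) : Prop := ∃ k : ℕ, σ^[k] v = w

def orbit {α : Type*} (σ : α → α) (v : α) : Set α := {w | inOrbit σ v w}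

/-- `v` is the cycle representative (the lexicographically least state) of its orbit. -/
def isCycleRep {m : ℕ} (σ : (Fin m → F2) → (Fin m → F2)) (v : Fin m → F2) : Prop :=
  ∀ w ∈ orbit σ v, lexLe v w

/-- Hamming weight. -/
noncomputable def wt {m : ℕ} (u : Fin m → F2) : ℕ :=
  (Finset.univ.filter (fun j : Fin m => u j = 1)).card

/-- The operator `Λ`: cyclically shift a nonzero tuple so that its first `1`
moves to the end (identity on the zero tuple). -/
noncomputable def Lam {m : ℕ} (u : Fin m → F2) : Fin m → F2 :=
  if h : (Finset.univ.filter (fun j : Fin m => u j = 1)).Nonempty then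
    rot (((Finset.univ.filter (fun j : Fin m => u j = 1)).min' h).val + 1) u
  else u

/-- The operator `Θ`: if `j ≥ 1` is the least index (0-based) with `u j = 0`,
rotate left by `j`; fixes tuples with no such index. -/
noncomputable def Theta {m : ℕ} (u : Fin m → F2) : Fin m → F2 :=
  if h : (Finset.univ.filter (fun j : Fin m => 0 < (j : ℕ) ∧ u j = 0)).Nonempty then
    rot ((Finset.univ.filter (fun j : Fin m => 0 < (j : ℕ) ∧ u j = 0)).min' h).val u
  else u

/-- Conjugate state: first bit complemented. -/
def conjSt {n : ℕ} (v : Fin n → F2) : Fin n → F2 :=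
  fun i => if (i : ℕ) = 0 then v i + 1 else v i

/-- Companion state: last bit complemented. -/
def compSt {n : ℕ} (v : Fin n → F2) : Fin n → F2 :=
  fun i => if (i : ℕ) + 1 = n then v i + 1 else v i

/-- `(c_1,…,c_{n-1}, b)`. -/
def shiftIn {n : ℕ} (c : Fin n → F2) (b : F2) : Fin n → F2 :=
  fun i => if h : (i : ℕ) + 1 < n then c ⟨(i : ℕ) + 1, h⟩ else b

/-- `lcm(1,2,…,m)`. -/
def lcmUpTo (m : ℕ) : ℕ := (Finset.Icc 1 m).lcm id

/-- Admissible parameters `1 = k_1 < k_2 < … < k_t = n`, `k_{t-1} < n-1`, `2 ≤ t ≤ n-1`,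
for the rules `Ψ₁` and `Υ₁` (the values `k 1, …, k t` of `k : ℕ → ℕ`). -/
def validParams (n t : ℕ) (k : ℕ → ℕ) : Prop :=
  2 ≤ t ∧ t ≤ n - 1 ∧ k 1 = 1 ∧ k t = n ∧
  (∀ i : ℕ, 1 ≤ i → i < t → k i < k (i + 1)) ∧ k (t - 1) < n - 1

/-- The successor rule `Ψ₁` of Theorem 3.2. -/
noncomputable def Psi1Rule {n : ℕ} (t : ℕ) (k : ℕ → ℕ) (c : Fin n → F2) : F2 :=
  if (get c 1 = 0 ∧ IsCoNecklace (stTail c)) ∨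
     (get c 1 = 1 ∧ ∃ i : ℕ, 1 ≤ i ∧ i < t ∧ k i ≤ wt (stTail c) ∧
        wt (stTail c) < k (i + 1) ∧ IsNecklace (Lam^[k i] (stTail c)))
  then fPRR c + 1 else fPRR c

/-- The successor rule `Ψ₂` of Theorem 3.4. -/
noncomputable def Psi2Rule {n : ℕ} (k : ℕ) (c : Fin n → F2) : F2 :=
  if (get c 1 = 0 ∧ IsCoNecklace (stTail c)) ∨
     (get c 1 = 1 ∧ IsNecklace (Lam^[k] (stTail c)))
  then fPRR c + 1 else fPRR c

/-- `y_c = (c̄_1,…,c̄_{n-2}, 0) ∈ F₂^{n-1}`. -/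
noncomputable def yState {n : ℕ} (c : Fin n → F2) : Fin (n - 1) → F2 :=
  fun i => if (i : ℕ) < n - 2 then get c ((i : ℕ) + 1) + 1 else 0

/-- `w_c = (0, c_1,…,c_{n-2}) ∈ F₂^{n-1}`. -/
noncomputable def wState {n : ℕ} (c : Fin n → F2) : Fin (n - 1) → F2 :=
  fun i => if (i : ℕ) = 0 then 0 else get c (i : ℕ)

/-- The successor rule `Υ₁` of Theorem 4.2. -/
noncomputable def Ups1Rule {n : ℕ} (t : ℕ) (k : ℕ → ℕ) (c : Fin n → F2) : F2 :=
  if (get c (n - 1) = 1 ∧ IsCoNecklace (yState c)) ∨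
     (get c (n - 1) = 0 ∧ ∃ i : ℕ, 1 ≤ i ∧ i < t ∧
        k i ≤ wt (fun j => wState c j + 1) ∧ wt (fun j => wState c j + 1) < k (i + 1) ∧
        IsNecklace (Theta^[k i - 1] (wState c)))
  then fPRR c + 1 else fPRR c

/-- The successor rule `Υ₂` of Theorem 4.3. -/
noncomputable def Ups2Rule {n : ℕ} (k : ℕ) (c : Fin n → F2) : F2 :=
  if (get c (n - 1) = 1 ∧ IsCoNecklace (yState c)) ∨
     (get c (n - 1) = 0 ∧ IsNecklace (Theta^[k] (wState c)))
  then fPRR c + 1 else fPRR c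

/-- `x_c` of Theorem 4.1: `(0,c_1,…,c_{n-1})` if `c_{n-1}=0`,
and `(c̄_1,…,c̄_{n-2},0,c_1)` if `c_{n-1}=1`. -/
noncomputable def xState {n : ℕ} (c : Fin n → F2) : Fin n → F2 :=
  if get c (n - 1) = 0 then (fun i => if (i : ℕ) = 0 then 0 else c i)
  else fun i => if (i : ℕ) < n - 2 then get c ((i : ℕ) + 1) + 1
       else if (i : ℕ) = n - 2 then 0 else get c 1

set_option linter.unusedSectionVars false

section OrbitAux

variable {α : Type*} [Fintype α] {σ τ : α → α}

lemma inOrbit_refl (σ : α → α) (x : α) : inOrbit σ x x := ⟨0, rfl⟩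

lemma inOrbit_trans {x y z : α} (h1 : inOrbit σ x y) (h2 : inOrbit σ y z) :
    inOrbit σ x z := by
  obtain ⟨k, hk⟩ := h1; obtain ⟨l, hl⟩ := h2
  exact ⟨l + k, by rw [Function.iterate_add_apply, hk, hl]⟩

lemma iterate_fix_mul {x : α} {p : ℕ} (h : σ^[p] x = x) (q : ℕ) : σ^[q * p] x = x := by
  induction q with
  | zero => simp
  | succ q ih =>
      have he : (q + 1) * p = q * p + p := by ring
      rw [he, Function.iterate_add_apply, h, ih]

lemma exists_period (hσ : Function.Injective σ) (x : α) : ∃ p, 0 < p ∧ σ^[p] x = x := by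
  obtain ⟨i, j, hne, he⟩ := Fintype.exists_ne_map_eq_of_card_lt
    (fun k : Fin (Fintype.card α + 1) => σ^[(k : ℕ)] x) (by simp)
  have key : ∀ i j : ℕ, i < j → σ^[i] x = σ^[j] x → ∃ p, 0 < p ∧ σ^[p] x = x := by
    intro i j hij he
    refine ⟨j - i, by omega, ?_⟩
    have h1 : σ^[i] (σ^[j-i] x) = σ^[i] x := by
      rw [← Function.iterate_add_apply]
      have : i + (j - i) = j := by omega
      rw [this, he]
    exact hσ.iterate i h1
  rcases Nat.lt_or_ge (i : ℕ) (j : ℕ) with h | h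
  · exact key _ _ h he
  · have h' : (j : ℕ) < (i : ℕ) := by
      rcases Nat.lt_or_ge (j : ℕ) (i : ℕ) with h2 | h2
      · exact h2
      · exact absurd (Fin.ext (le_antisymm h2 h)) hne
    exact key _ _ h' he.symm

lemma inOrbit_symm (hσ : Function.Injective σ) {x y : α} (h : inOrbit σ x y) :
    inOrbit σ y x := by
  obtain ⟨k, hk⟩ := h
  obtain ⟨p, hp, hfix⟩ := exists_period hσ x
  refine ⟨k * p - k, ?_⟩
  have h1 : k * p - k + k = k * p := by
    have := Nat.le_mul_of_pos_right k hp; omega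
  rw [← hk, ← Function.iterate_add_apply, h1, iterate_fix_mul hfix k]

lemma orbit_chain {z : α} :
    ∀ j : ℕ, (∀ i, i < j → inOrbit τ (σ^[i] z) (σ^[i+1] z)) → inOrbit τ z (σ^[j] z) := by
  intro j
  induction j with
  | zero => intro _; exact inOrbit_refl τ z
  | succ j ih =>
      intro h
      exact inOrbit_trans (ih (fun i hi => h i (by omega))) (h j (by omega))

end OrbitAux

section ValAux

variable {m : ℕ}

noncomputable def val2 (c : Fin m → F2) : ℕ := ∑ i : Fin m, (c i).val * 2 ^ (m - 1 - (i : ℕ))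

lemma sum_range_two_pow (k : ℕ) : ∑ t ∈ Finset.range k, 2 ^ t = 2 ^ k - 1 := by
  induction k with
  | zero => rfl
  | succ k ih =>
      rw [Finset.sum_range_succ, ih]
      have : 0 < 2 ^ k := Nat.pow_pos (by omega)
      omega

lemma sum_pow_lt (c : Fin m → F2) (s : Finset (Fin m)) (K : ℕ)
    (h : ∀ i ∈ s, m - 1 - (i : ℕ) < K) :
    ∑ i ∈ s, (c i).val * 2 ^ (m - 1 - (i : ℕ)) < 2 ^ K := by
  have h1 : ∑ i ∈ s, (c i).val * 2 ^ (m - 1 - (i : ℕ)) ≤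
      ∑ i ∈ s, 2 ^ (m - 1 - (i : ℕ)) := by
    apply Finset.sum_le_sum
    intro i _
    have hv : (c i).val ≤ 1 := by have := ZMod.val_lt (c i); omega
    calc (c i).val * 2 ^ (m - 1 - (i : ℕ)) ≤ 1 * 2 ^ (m - 1 - (i : ℕ)) :=
          Nat.mul_le_mul_right _ hv
      _ = 2 ^ (m - 1 - (i : ℕ)) := one_mul _
  have h2 : ∑ i ∈ s, 2 ^ (m - 1 - (i : ℕ)) =
      ∑ t ∈ s.image (fun i : Fin m => m - 1 - (i : ℕ)), 2 ^ t := by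
    rw [Finset.sum_image]
    intro i _ j _ hij
    have hi := i.isLt; have hj := j.isLt
    have hij' : m - 1 - (i : ℕ) = m - 1 - (j : ℕ) := hij
    exact Fin.ext (by omega)
  have h3 : s.image (fun i : Fin m => m - 1 - (i : ℕ)) ⊆ Finset.range K := by
    intro t ht
    simp only [Finset.mem_image] at ht
    obtain ⟨i, hi, rfl⟩ := ht
    exact Finset.mem_range.mpr (h i hi)
  have h4 : ∑ t ∈ s.image (fun i : Fin m => m - 1 - (i : ℕ)), 2 ^ t ≤
      ∑ t ∈ Finset.range K, 2 ^ t := Finset.sum_le_sum_of_subset h3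
  rw [sum_range_two_pow] at h4
  have h5 : 0 < 2 ^ K := Nat.pow_pos (by omega)
  omega

lemma val2_lt_two_pow (c : Fin m → F2) : val2 c < 2 ^ m := by
  apply sum_pow_lt c Finset.univ m
  intro i _
  have := i.isLt; omega

lemma sum_split (j : Fin m) (f : Fin m → ℕ) :
    ∑ i : Fin m, f i =
      (∑ i ∈ Finset.univ.filter (fun i : Fin m => (i : ℕ) < (j : ℕ)), f i) + f j +
      ∑ i ∈ Finset.univ.filter (fun i : Fin m => (j : ℕ) < (i : ℕ)), f i := by
  rw [← Finset.sum_filter_add_sum_filter_not Finset.univ (fun i : Fin m => (i : ℕ) < (j : ℕ)) f]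
  have he : Finset.univ.filter (fun i : Fin m => ¬ (i : ℕ) < (j : ℕ)) =
      insert j (Finset.univ.filter (fun i : Fin m => (j : ℕ) < (i : ℕ))) := by
    ext i
    simp only [Finset.mem_filter, Finset.mem_univ, true_and, Finset.mem_insert, Fin.ext_iff]
    omega
  rw [he, Finset.sum_insert (by simp)]
  ring

lemma val2_lt_of_split (c d : Fin m → F2) (j : Fin m)
    (hpre : ∀ i : Fin m, (i : ℕ) < (j : ℕ) → c i = d i) (hc : c j = 0) (hd : d j = 1) :
    val2 c < val2 d := by
  unfold val2
  rw [sum_split j, sum_split j]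
  have hP : ∑ i ∈ Finset.univ.filter (fun i : Fin m => (i : ℕ) < (j : ℕ)),
      (c i).val * 2 ^ (m - 1 - (i : ℕ)) =
      ∑ i ∈ Finset.univ.filter (fun i : Fin m => (i : ℕ) < (j : ℕ)),
      (d i).val * 2 ^ (m - 1 - (i : ℕ)) := by
    apply Finset.sum_congr rfl
    intro i hi
    simp only [Finset.mem_filter] at hi
    rw [hpre i hi.2]
  have hT : ∑ i ∈ Finset.univ.filter (fun i : Fin m => (j : ℕ) < (i : ℕ)),
      (c i).val * 2 ^ (m - 1 - (i : ℕ)) < 2 ^ (m - 1 - (j : ℕ)) := by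
    apply sum_pow_lt
    intro i hi
    simp only [Finset.mem_filter] at hi
    have := i.isLt; have := j.isLt
    omega
  have hv0 : (0 : F2).val = 0 := rfl
  have hv1 : (1 : F2).val = 1 := rfl
  have hcj : (c j).val * 2 ^ (m - 1 - (j : ℕ)) = 0 := by rw [hc, hv0, Nat.zero_mul]
  have hdj : (d j).val * 2 ^ (m - 1 - (j : ℕ)) = 2 ^ (m - 1 - (j : ℕ)) := by
    rw [hd, hv1, Nat.one_mul]
  rw [hP, hcj, hdj]
  omega

lemma first_diff {c d : Fin m → F2} (h : c ≠ d) :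
    ∃ j : Fin m, (∀ i : Fin m, i < j → c i = d i) ∧ c j ≠ d j := by
  have hne : (Finset.univ.filter (fun i : Fin m => c i ≠ d i)).Nonempty := by
    rw [Function.ne_iff] at h
    obtain ⟨i, hi⟩ := h
    exact ⟨i, by simp [hi]⟩
  set s := Finset.univ.filter (fun i : Fin m => c i ≠ d i)
  refine ⟨s.min' hne, ?_, ?_⟩
  · intro i hi
    by_contra hci
    have : s.min' hne ≤ i := Finset.min'_le s i (by simp [s, hci])
    exact absurd (lt_of_lt_of_le hi this) (lt_irrefl _)
  · have := Finset.min'_mem s hne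
    simpa [s] using this

lemma F2_cases_val {a b : F2} (h : a.val < b.val) : a = 0 ∧ b = 1 := by
  revert a b; decide

lemma F2_val_inj {a b : F2} (h : a.val = b.val) : a = b := by
  revert a b; decide

lemma lexLe_refl (c : Fin m → F2) : lexLe c c := fun _ _ => le_refl _

lemma lexLe_of_diff {c d : Fin m → F2} {j : Fin m}
    (hpre : ∀ i : Fin m, i < j → c i = d i) (hj : (c j).val < (d j).val) : lexLe c d := by
  intro j' hp
  rcases lt_trichotomy j' j with h | h | h
  · rw [hpre j' h]
  · subst h; exact le_of_lt hj
  · have := hp j h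
    rw [this] at hj
    exact absurd hj (lt_irrefl _)

lemma lexLt_of_diff {c d : Fin m → F2} {j : Fin m}
    (hpre : ∀ i : Fin m, i < j → c i = d i) (hj : (c j).val < (d j).val) : lexLt c d := by
  refine ⟨lexLe_of_diff hpre hj, ?_⟩
  intro h; subst h; exact absurd hj (lt_irrefl _)

lemma val2_lt_of_lexLt {c d : Fin m → F2} (h : lexLt c d) : val2 c < val2 d := by
  obtain ⟨hle, hne⟩ := h
  obtain ⟨j, hpre, hj⟩ := first_diff hne
  have hv := hle j hpre
  have hlt : (c j).val < (d j).val := lt_of_le_of_ne hv (fun h => hj (F2_val_inj h))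
  obtain ⟨h0, h1⟩ := F2_cases_val hlt
  exact val2_lt_of_split c d j (fun i hi => hpre i (by rwa [Fin.lt_def])) h0 h1

lemma lexLt_total {c d : Fin m → F2} (h : c ≠ d) : lexLt c d ∨ lexLt d c := by
  obtain ⟨j, hpre, hj⟩ := first_diff h
  rcases lt_trichotomy (c j).val (d j).val with hv | hv | hv
  · exact Or.inl (lexLt_of_diff hpre hv)
  · exact absurd (F2_val_inj hv) hj
  · exact Or.inr (lexLt_of_diff (fun i hi => (hpre i hi).symm) hv)

lemma val2_le_of_lexLe {c d : Fin m → F2} (h : lexLe c d) : val2 c ≤ val2 d := by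
  by_cases hcd : c = d
  · subst hcd; exact le_refl _
  · exact le_of_lt (val2_lt_of_lexLt ⟨h, hcd⟩)

lemma lexLe_of_val2_le {c d : Fin m → F2} (h : val2 c ≤ val2 d) : lexLe c d := by
  by_cases hcd : c = d
  · subst hcd; exact lexLe_refl c
  · rcases lexLt_total hcd with h1 | h1
    · exact h1.1
    · exact absurd (val2_lt_of_lexLt h1) (by omega)

lemma val2_eq_zero {c : Fin m → F2} (h : val2 c = 0) : c = 0 := by
  funext i
  have := Finset.sum_eq_zero_iff.mp h i (Finset.mem_univ i)
  have h2 : 0 < 2 ^ (m - 1 - (i : ℕ)) := Nat.pow_pos (by omega)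
  have h3 : (c i).val = 0 := by
    rcases Nat.mul_eq_zero.mp this with h | h
    · exact h
    · omega
  show c i = 0
  exact F2_val_inj (by rw [h3]; rfl)

end ValAux
section StateAux

variable {n : ℕ}

noncomputable abbrev sig (n : ℕ) : (Fin n → F2) → (Fin n → F2) := nextMap (n := n) fPRR

lemma get_eq (c : Fin n → F2) (j : ℕ) (h : j < n) : get c j = c ⟨j, h⟩ := dif_pos h

lemma shiftIn_coord_lt (c : Fin n → F2) (b : F2) (i : Fin n) (h : (i : ℕ) + 1 < n) :
    shiftIn c b i = c ⟨(i : ℕ) + 1, h⟩ := dif_pos h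

lemma shiftIn_coord_last (c : Fin n → F2) (b : F2) (i : Fin n) (h : ¬ ((i : ℕ) + 1 < n)) :
    shiftIn c b i = b := dif_neg h

lemma nextMap_eq_shiftIn (ρ : (Fin n → F2) → F2) (c : Fin n → F2) :
    nextMap ρ c = shiftIn c (ρ c) := rfl

lemma compSt_coord_lt (v : Fin n → F2) (i : Fin n) (h : (i : ℕ) + 1 ≠ n) :
    compSt v i = v i := if_neg h

lemma compSt_coord_last (v : Fin n → F2) (i : Fin n) (h : (i : ℕ) + 1 = n) :
    compSt v i = v i + 1 := if_pos h

lemma F2_cases (a : F2) : a = 0 ∨ a = 1 := by revert a; decide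
lemma F2_add_eq_zero {a b : F2} (h : a + b = 0) : a = b := by revert a b h; decide
lemma F2_zero_add_eq_one {a : F2} (h : (0:F2) + a = 1) : a = 1 := by revert a h; decide
lemma F2_one_add_one : (1:F2) + 1 = 0 := by decide
lemma F2_val_le_zero {a : F2} (h : a.val ≤ 0) : a = 0 := by
  have : a.val = 0 := by omega
  exact F2_val_inj (by rw [this]; rfl)
lemma F2_shuffle (a b x : F2) : x + (a + x + b) = a + b := by revert a b x; decide
lemma F2_bsum (a b : F2) : (a + b) + a + b = 0 := by revert a b; decide
lemma F2_bsum1 (a b : F2) : (a + b + 1) + a + b = 1 := by revert a b; decide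

lemma compSt_shiftIn (c : Fin n → F2) : compSt (shiftIn c 1) = shiftIn c 0 := by
  funext i
  by_cases h : (i : ℕ) + 1 < n
  · rw [compSt_coord_lt _ _ (by omega), shiftIn_coord_lt c 1 i h, shiftIn_coord_lt c 0 i h]
  · have hi := i.isLt
    rw [compSt_coord_last _ _ (by omega), shiftIn_coord_last c 1 i h,
      shiftIn_coord_last c 0 i h, F2_one_add_one]

lemma fPRR_eval (hn : 3 ≤ n) (c : Fin n → F2) :
    fPRR c = c ⟨0, by omega⟩ + c ⟨1, by omega⟩ + c ⟨n - 1, by omega⟩ := by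
  unfold fPRR
  rw [get_eq c 0 (by omega), get_eq c 1 (by omega), get_eq c (n-1) (by omega)]

lemma sig_coord_lt (c : Fin n → F2) (i : Fin n) (h : (i : ℕ) + 1 < n) :
    sig n c i = c ⟨(i : ℕ) + 1, h⟩ := dif_pos h

lemma sig_coord_last (c : Fin n → F2) (i : Fin n) (h : ¬ ((i : ℕ) + 1 < n)) :
    sig n c i = fPRR c := dif_neg h

lemma coord_head (c : Fin n → F2) :
    ∀ (i k : ℕ) (h : i < n), ((sig n)^[k] c) ⟨i, h⟩ = ((sig n)^[k + i] c) ⟨0, by omega⟩ := by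
  intro i
  induction i with
  | zero => intro k h; rfl
  | succ i ih =>
      intro k h
      have e1 : ((sig n)^[k] c) ⟨i+1, h⟩ = (sig n ((sig n)^[k] c)) ⟨i, by omega⟩ := by
        rw [sig_coord_lt ((sig n)^[k] c) ⟨i, by omega⟩ h]
      have e2 : sig n ((sig n)^[k] c) = (sig n)^[k+1] c :=
        (Function.iterate_succ_apply' (sig n) k c).symm
      rw [e1, e2, ih (k+1) (by omega)]
      simp only [show k + 1 + i = k + (i + 1) from by omega]

lemma typ_step (hn : 3 ≤ n) (c : Fin n → F2) :
    (sig n c) ⟨0, by omega⟩ + (sig n c) ⟨n - 1, by omega⟩ = c ⟨0, by omega⟩ + c ⟨n - 1, by omega⟩ := by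
  rw [sig_coord_lt c ⟨0, by omega⟩ (by show 0+1 < n; omega), sig_coord_last c ⟨n-1, by omega⟩ (by show ¬(n-1+1 < n); omega),
    fPRR_eval hn c]
  exact F2_shuffle _ _ _

lemma typ_iter (hn : 3 ≤ n) (c : Fin n → F2) (k : ℕ) :
    ((sig n)^[k] c) ⟨0, by omega⟩ + ((sig n)^[k] c) ⟨n - 1, by omega⟩ =
      c ⟨0, by omega⟩ + c ⟨n - 1, by omega⟩ := by
  induction k with
  | zero => rfl
  | succ k ih =>
      rw [Function.iterate_succ_apply' (sig n) k c, typ_step hn, ih]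

lemma typ_orbit (hn : 3 ≤ n) {x w : Fin n → F2} (h : inOrbit (sig n) x w) :
    w ⟨0, by omega⟩ + w ⟨n - 1, by omega⟩ = x ⟨0, by omega⟩ + x ⟨n - 1, by omega⟩ := by
  obtain ⟨k, hk⟩ := h
  rw [← hk]
  exact typ_iter hn x k

lemma sig_inj (hn : 3 ≤ n) : Function.Injective (sig n) := by
  intro c d h
  have hco : ∀ (j : ℕ) (h1 : j + 1 < n), c ⟨j+1, h1⟩ = d ⟨j+1, h1⟩ := by
    intro j h1
    have := congrFun h ⟨j, by omega⟩
    rwa [sig_coord_lt c ⟨j, by omega⟩ h1, sig_coord_lt d ⟨j, by omega⟩ h1] at this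
  have hlast := congrFun h ⟨n-1, by omega⟩
  rw [sig_coord_last c ⟨n-1, by omega⟩ (by show ¬(n-1+1 < n); omega),
    sig_coord_last d ⟨n-1, by omega⟩ (by show ¬(n-1+1 < n); omega), fPRR_eval hn, fPRR_eval hn] at hlast
  have h1 : c ⟨1, by omega⟩ = d ⟨1, by omega⟩ := by
    have := hco 0 (by omega); exact this
  have hl : c ⟨n-1, by omega⟩ = d ⟨n-1, by omega⟩ := by
    have := hco (n-2) (by omega)
    have e : n - 2 + 1 = n - 1 := by omega
    simp only [e] at this
    exact this
  have h0 : c ⟨0, by omega⟩ = d ⟨0, by omega⟩ := by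
    rw [h1, hl] at hlast
    have := add_right_cancel (add_right_cancel hlast)
    exact this
  funext i
  rcases Nat.eq_zero_or_pos (i : ℕ) with hi | hi
  · have : i = ⟨0, by omega⟩ := Fin.ext hi
    rw [this]; exact h0
  · have hi2 : (i : ℕ) - 1 + 1 < n := by have := i.isLt; omega
    have : i = ⟨(i : ℕ) - 1 + 1, hi2⟩ := Fin.ext (by show (i:ℕ) = (i:ℕ) - 1 + 1; omega)
    rw [this]; exact hco _ _

lemma sig_zero (hn : 3 ≤ n) : sig n (0 : Fin n → F2) = 0 := by
  funext i
  have hf : fPRR (0 : Fin n → F2) = 0 := by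
    rw [fPRR_eval hn]; simp
  by_cases h : (i : ℕ) + 1 < n
  · rw [sig_coord_lt _ i h]; rfl
  · rw [sig_coord_last _ i h, hf]; rfl

lemma pcr_period (hn : 3 ≤ n) {v : Fin n → F2}
    (hPCR : ∀ w, inOrbit (sig n) v w → w ⟨0, by omega⟩ = w ⟨n - 1, by omega⟩) :
    (sig n)^[n-1] v = v := by
  have hper : ∀ j : ℕ, ((sig n)^[j + (n-1)] v) ⟨0, by omega⟩ = ((sig n)^[j] v) ⟨0, by omega⟩ := by
    intro j
    have h1 := coord_head v (n-1) j (by omega)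
    rw [← h1]
    exact (hPCR ((sig n)^[j] v) ⟨j, rfl⟩).symm
  funext i
  have e1 := coord_head v (i : ℕ) (n-1) i.isLt
  have e2 := coord_head v (i : ℕ) 0 i.isLt
  simp only [Nat.zero_add, Function.iterate_zero_apply] at e2
  have e3 : ((sig n)^[n - 1 + (i:ℕ)] v) ⟨0, by omega⟩ = ((sig n)^[(i:ℕ)] v) ⟨0, by omega⟩ := by
    have := hper (i : ℕ)
    simp only [show (i:ℕ) + (n-1) = n - 1 + (i:ℕ) from by omega] at this
    exact this
  have h4 : ((sig n)^[n-1] v) ⟨(i:ℕ), i.isLt⟩ = v ⟨(i:ℕ), i.isLt⟩ := by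
    rw [e1, e3, ← e2]
  simp only [Fin.eta] at h4
  exact h4

lemma pcr_iter_mod (hn : 3 ≤ n) {v : Fin n → F2}
    (hPCR : ∀ w, inOrbit (sig n) v w → w ⟨0, by omega⟩ = w ⟨n - 1, by omega⟩) (k : ℕ) :
    (sig n)^[k] v = (sig n)^[k % (n-1)] v := by
  have hfix := pcr_period hn hPCR
  calc (sig n)^[k] v = (sig n)^[k % (n-1) + (k / (n-1)) * (n-1)] v := by
        rw [Nat.mod_add_div']
    _ = (sig n)^[k % (n-1)] ((sig n)^[(k / (n-1)) * (n-1)] v) := Function.iterate_add_apply _ _ _ _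
    _ = (sig n)^[k % (n-1)] v := by rw [iterate_fix_mul hfix]

end StateAux

section MkPre

variable {n : ℕ}

noncomputable def mkPre (v : Fin n → F2) (ε : F2) : Fin n → F2 :=
  fun i => if _ : (i : ℕ) = 0 then ε else v ⟨(i : ℕ) - 1, by have := i.isLt; omega⟩

lemma sig_eq_shiftIn (c : Fin n → F2) : sig n c = shiftIn c (fPRR c) := rfl

lemma mkPre_shiftIn (hn : 3 ≤ n) (v : Fin n → F2) (ε : F2) (hlast : get v (n-1) = 1) :
    shiftIn (mkPre v ε) 1 = v := by
  funext i
  by_cases h : (i : ℕ) + 1 < n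
  · rw [shiftIn_coord_lt _ _ i h]
    show mkPre v ε ⟨(i : ℕ) + 1, h⟩ = v i
    unfold mkPre
    rw [dif_neg (by show ¬((i:ℕ)+1 = 0); omega)]
    congr 1
  · rw [shiftIn_coord_last _ _ i h]
    have he : i = ⟨n-1, by omega⟩ := Fin.ext (by have := i.isLt; show (i:ℕ) = n-1; omega)
    rw [he, ← get_eq v (n-1) (by omega), hlast]

lemma mkPre_fPRR (hn : 3 ≤ n) (v : Fin n → F2) (ε : F2) :
    fPRR (mkPre v ε) = ε + v ⟨0, by omega⟩ + v ⟨n-2, by omega⟩ := by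
  rw [fPRR_eval hn]
  have e0 : mkPre v ε ⟨0, by omega⟩ = ε := by unfold mkPre; rw [dif_pos rfl]
  have e1 : mkPre v ε ⟨1, by omega⟩ = v ⟨0, by omega⟩ := by
    unfold mkPre
    rw [dif_neg (by show ¬((1:ℕ) = 0); omega)]
    rfl
  have e2 : mkPre v ε ⟨n-1, by omega⟩ = v ⟨n-2, by omega⟩ := by
    unfold mkPre
    rw [dif_neg (by show ¬(n-1 = 0); omega)]
    congr 1
  rw [e0, e1, e2]

end MkPre
section MainAux

variable {n : ℕ}

def Acond (sel : (Fin n → F2) → (Fin n → F2)) (c : Fin n → F2) : Prop :=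
  (get c 1 = 0 ∧ isCycleRep (nextMap (n := n) fPRR) (shiftIn c 1)) ∨
  (get c 1 = 1 ∧ shiftIn c 1 = sel (shiftIn c 1))

noncomputable def Psi (sel : (Fin n → F2) → (Fin n → F2)) (c : Fin n → F2) : F2 :=
  if (get c 1 = 0 ∧ isCycleRep (nextMap (n := n) fPRR) (shiftIn c 1)) ∨
     (get c 1 = 1 ∧ shiftIn c 1 = sel (shiftIn c 1))
  then fPRR c + 1 else fPRR c

lemma Psi_pos {sel : (Fin n → F2) → (Fin n → F2)} {c : Fin n → F2} (h : Acond sel c) :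
    Psi sel c = fPRR c + 1 := if_pos h

lemma Psi_neg {sel : (Fin n → F2) → (Fin n → F2)} {c : Fin n → F2} (h : ¬ Acond sel c) :
    Psi sel c = fPRR c := if_neg h

def Spec (sel : (Fin n → F2) → (Fin n → F2)) (v : Fin n → F2) : Prop :=
  get v (n-1) = 1 ∧
  ((get v 0 = 0 ∧ isCycleRep (sig n) v) ∨ (get v 0 = 1 ∧ v = sel v))

lemma get0_shift (hn : 3 ≤ n) (c : Fin n → F2) : get (shiftIn c 1) 0 = get c 1 := by
  rw [get_eq _ 0 (by omega), shiftIn_coord_lt c 1 ⟨0, by omega⟩ (by show 0+1 < n; omega),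
    get_eq c 1 (by omega)]

lemma getlast_shift (hn : 3 ≤ n) (c : Fin n → F2) : get (shiftIn c 1) (n-1) = 1 := by
  rw [get_eq _ (n-1) (by omega),
    shiftIn_coord_last c 1 ⟨n-1, by omega⟩ (by show ¬(n-1+1 < n); omega)]

lemma A_to_Spec (hn : 3 ≤ n) {sel : (Fin n → F2) → (Fin n → F2)} {c : Fin n → F2}
    (h : Acond sel c) : Spec sel (shiftIn c 1) := by
  refine ⟨getlast_shift hn c, ?_⟩
  rcases h with ⟨h1, h2⟩ | ⟨h1, h2⟩
  · exact Or.inl ⟨by rw [get0_shift hn]; exact h1, h2⟩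
  · exact Or.inr ⟨by rw [get0_shift hn]; exact h1, h2⟩

lemma Spec_to_A (hn : 3 ≤ n) {sel : (Fin n → F2) → (Fin n → F2)} {c v : Fin n → F2}
    (hs : Spec sel v) (he : shiftIn c 1 = v) : Acond sel c := by
  subst he
  obtain ⟨_, hb⟩ := hs
  rcases hb with ⟨h1, h2⟩ | ⟨h1, h2⟩
  · exact Or.inl ⟨by rw [← get0_shift hn]; exact h1, h2⟩
  · exact Or.inr ⟨by rw [← get0_shift hn]; exact h1, h2⟩

lemma lexLe_antisymm {m : ℕ} {c d : Fin m → F2} (h1 : lexLe c d) (h2 : lexLe d c) : c = d := by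
  by_contra hne
  rcases lexLt_total hne with h | h
  · have := val2_lt_of_lexLt h
    have := val2_le_of_lexLe h2
    omega
  · have := val2_lt_of_lexLt h
    have := val2_le_of_lexLe h1
    omega

lemma Spec_unique (hn : 3 ≤ n) {sel : (Fin n → F2) → (Fin n → F2)}
    (hconst : ∀ v w, inOrbit (sig n) v w → sel v = sel w)
    {v v' : Fin n → F2} (h1 : Spec sel v) (h2 : Spec sel v') (horb : inOrbit (sig n) v v') :
    v = v' := by
  obtain ⟨hl1, hb1⟩ := h1
  obtain ⟨hl2, hb2⟩ := h2
  have e2 : v ⟨n-1, by omega⟩ = 1 := by rw [← get_eq v (n-1) (by omega)]; exact hl1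
  have e4 : v' ⟨n-1, by omega⟩ = 1 := by rw [← get_eq v' (n-1) (by omega)]; exact hl2
  rcases hb1 with ⟨h01, hrep1⟩ | ⟨h01, hsel1⟩ <;> rcases hb2 with ⟨h02, hrep2⟩ | ⟨h02, hsel2⟩
  · exact lexLe_antisymm (hrep1 v' horb) (hrep2 v (inOrbit_symm (sig_inj hn) horb))
  · have ht := typ_orbit hn horb
    have e1 : v ⟨0, by omega⟩ = 0 := by rw [← get_eq v 0 (by omega)]; exact h01
    have e3 : v' ⟨0, by omega⟩ = 1 := by rw [← get_eq v' 0 (by omega)]; exact h02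
    rw [e1, e2, e3, e4] at ht
    exact absurd ht (by decide)
  · have ht := typ_orbit hn horb
    have e1 : v ⟨0, by omega⟩ = 1 := by rw [← get_eq v 0 (by omega)]; exact h01
    have e3 : v' ⟨0, by omega⟩ = 0 := by rw [← get_eq v' 0 (by omega)]; exact h02
    rw [e1, e2, e3, e4] at ht
    exact absurd ht (by decide)
  · rw [hsel1, hconst v v' horb, ← hsel2]

noncomputable def nu (n : ℕ) (x : Fin n → F2) : ℕ :=
  Finset.min' ((Finset.univ.filter (fun w => inOrbit (sig n) x w)).image val2)
    ⟨val2 x, Finset.mem_image_of_mem _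
      (Finset.mem_filter.mpr ⟨Finset.mem_univ x, inOrbit_refl _ x⟩)⟩

lemma nu_le {x w : Fin n → F2} (h : inOrbit (sig n) x w) : nu n x ≤ val2 w :=
  Finset.min'_le _ _ (Finset.mem_image_of_mem _
    (Finset.mem_filter.mpr ⟨Finset.mem_univ w, h⟩))

lemma nu_exists (x : Fin n → F2) : ∃ m, inOrbit (sig n) x m ∧ val2 m = nu n x := by
  have h := Finset.min'_mem
    ((Finset.univ.filter (fun w => inOrbit (sig n) x w)).image val2)
    ⟨val2 x, Finset.mem_image_of_mem _
      (Finset.mem_filter.mpr ⟨Finset.mem_univ x, inOrbit_refl _ x⟩)⟩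
  rw [Finset.mem_image] at h
  obtain ⟨m, hm, hv⟩ := h
  rw [Finset.mem_filter] at hm
  exact ⟨m, hm.2, hv⟩

lemma nu_congr (hn : 3 ≤ n) {x y : Fin n → F2} (h : inOrbit (sig n) x y) :
    nu n x = nu n y := by
  have hset : (Finset.univ.filter (fun w => inOrbit (sig n) x w)) =
      (Finset.univ.filter (fun w => inOrbit (sig n) y w)) := by
    ext w
    simp only [Finset.mem_filter, Finset.mem_univ, true_and]
    constructor
    · intro hw; exact inOrbit_trans (inOrbit_symm (sig_inj hn) h) hw
    · intro hw; exact inOrbit_trans h hw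
  unfold nu
  simp only [hset]

lemma nu_le_self (x : Fin n → F2) : nu n x ≤ val2 x := nu_le (inOrbit_refl _ x)

lemma nu_lt_pow (x : Fin n → F2) : nu n x < 2 ^ n :=
  lt_of_le_of_lt (nu_le_self x) (val2_lt_two_pow x)

noncomputable def aSt (v : Fin n → F2) : Fin n → F2 :=
  mkPre v (get v 0 + get v (n-2) + 1)

noncomputable def bSt (v : Fin n → F2) : Fin n → F2 :=
  mkPre v (get v 0 + get v (n-2))

lemma fPRR_aSt (hn : 3 ≤ n) (v : Fin n → F2) : fPRR (aSt v) = 1 := by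
  unfold aSt
  rw [mkPre_fPRR hn, get_eq v 0 (by omega), get_eq v (n-2) (by omega)]
  exact F2_bsum1 _ _

lemma fPRR_bSt (hn : 3 ≤ n) (v : Fin n → F2) : fPRR (bSt v) = 0 := by
  unfold bSt
  rw [mkPre_fPRR hn, get_eq v 0 (by omega), get_eq v (n-2) (by omega)]
  exact F2_bsum _ _

lemma sig_aSt (hn : 3 ≤ n) (v : Fin n → F2) (hlast : get v (n-1) = 1) :
    sig n (aSt v) = v := by
  rw [sig_eq_shiftIn, fPRR_aSt hn]
  exact mkPre_shiftIn hn v _ hlast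

lemma sig_bSt (hn : 3 ≤ n) (v : Fin n → F2) (hlast : get v (n-1) = 1) :
    sig n (bSt v) = compSt v := by
  rw [sig_eq_shiftIn, fPRR_bSt hn, ← compSt_shiftIn,
    show shiftIn (bSt v) 1 = v from mkPre_shiftIn hn v _ hlast]

lemma tau_aSt (hn : 3 ≤ n) {sel : (Fin n → F2) → (Fin n → F2)} {v : Fin n → F2}
    (hs : Spec sel v) : nextMap (Psi sel) (aSt v) = compSt v := by
  have hA : Acond sel (aSt v) := Spec_to_A hn hs (mkPre_shiftIn hn v _ hs.1)
  rw [nextMap_eq_shiftIn, Psi_pos hA, fPRR_aSt hn, F2_one_add_one, ← compSt_shiftIn,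
    show shiftIn (aSt v) 1 = v from mkPre_shiftIn hn v _ hs.1]

lemma tau_bSt (hn : 3 ≤ n) {sel : (Fin n → F2) → (Fin n → F2)} {v : Fin n → F2}
    (hs : Spec sel v) : nextMap (Psi sel) (bSt v) = v := by
  have hA : Acond sel (bSt v) := Spec_to_A hn hs (mkPre_shiftIn hn v _ hs.1)
  rw [nextMap_eq_shiftIn, Psi_pos hA, fPRR_bSt hn, zero_add]
  exact mkPre_shiftIn hn v _ hs.1

lemma key (hn : 3 ≤ n) {sel : (Fin n → F2) → (Fin n → F2)} {v : Fin n → F2}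
    (hs : Spec sel v) : nu n (compSt v) < nu n v := by
  obtain ⟨hlast, hb⟩ := hs
  have hlast' : v ⟨n-1, by omega⟩ = 1 := by rw [← get_eq v (n-1) (by omega)]; exact hlast
  rcases hb with ⟨h0, hrep⟩ | ⟨h0, hsel⟩
  · have hlt : val2 (compSt v) < val2 v := by
      apply val2_lt_of_split _ _ ⟨n-1, by omega⟩
      · intro i hi
        have hi' : (i : ℕ) < n - 1 := hi
        exact compSt_coord_lt v i (by omega)
      · rw [compSt_coord_last v ⟨n-1, by omega⟩ (by show n-1+1 = n; omega), hlast',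
          F2_one_add_one]
      · exact hlast'
    have hvv : nu n v = val2 v := by
      obtain ⟨m, hmo, hmv⟩ := nu_exists v
      have h1 : val2 v ≤ val2 m := val2_le_of_lexLe (hrep m hmo)
      have h2 := nu_le_self v
      omega
    have h3 := nu_le_self (compSt v)
    omega
  · have hPCR : ∀ w, inOrbit (sig n) v w → w ⟨0, by omega⟩ = w ⟨n-1, by omega⟩ := by
      intro w hw
      have ht := typ_orbit hn hw
      have h0' : v ⟨0, by omega⟩ = 1 := by rw [← get_eq v 0 (by omega)]; exact h0
      rw [h0', hlast', F2_one_add_one] at ht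
      exact F2_add_eq_zero ht
    obtain ⟨m, hmo, hmv⟩ := nu_exists v
    obtain ⟨k, hk⟩ := hmo
    set i := k % (n-1) with hidef
    have hin : i < n - 1 := Nat.mod_lt _ (by omega)
    have hm : m = (sig n)^[i] v := by rw [← hk, pcr_iter_mod hn hPCR k]
    have hcoord : ∀ (c : Fin n → F2) (l : Fin n) (h2 : i + (l : ℕ) < n),
        ((sig n)^[i] c) l = c ⟨i + (l : ℕ), h2⟩ := by
      intro c l h2
      have a1 := coord_head c (l : ℕ) i l.isLt
      have a2 := coord_head c (i + (l : ℕ)) 0 h2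
      simp only [Nat.zero_add, Function.iterate_zero_apply] at a2
      simp only [Fin.eta] at a1
      exact a1.trans a2.symm
    have hwlt : val2 ((sig n)^[i] (compSt v)) < val2 m := by
      apply val2_lt_of_split _ _ ⟨n-1-i, by omega⟩
      · intro l hl
        have hl' : (l : ℕ) < n-1-i := hl
        rw [hcoord (compSt v) l (by omega), hm, hcoord v l (by omega)]
        exact compSt_coord_lt v _ (by show i + (l:ℕ) + 1 ≠ n; omega)
      · rw [hcoord (compSt v) ⟨n-1-i, by omega⟩ (by show i + (n-1-i) < n; omega)]
        rw [compSt_coord_last v _ (by show i + (n-1-i) + 1 = n; omega)]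
        have he : (⟨i + (n-1-i), by omega⟩ : Fin n) = ⟨n-1, by omega⟩ :=
          Fin.ext (by show i + (n-1-i) = n-1; omega)
        rw [he, hlast', F2_one_add_one]
      · rw [hm, hcoord v ⟨n-1-i, by omega⟩ (by show i + (n-1-i) < n; omega)]
        have he : (⟨i + (n-1-i), by omega⟩ : Fin n) = ⟨n-1, by omega⟩ :=
          Fin.ext (by show i + (n-1-i) = n-1; omega)
        rw [he, hlast']
    have hcw : nu n (compSt v) ≤ val2 ((sig n)^[i] (compSt v)) := nu_le ⟨i, rfl⟩
    omega

end MainAux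
section FinalAux

variable {n : ℕ}

lemma tau_inj (hn : 3 ≤ n) (sel : (Fin n → F2) → (Fin n → F2)) :
    Function.Injective (nextMap (Psi sel)) := by
  intro c d h
  rw [nextMap_eq_shiftIn, nextMap_eq_shiftIn] at h
  have hco : ∀ (j : ℕ) (h1 : j + 1 < n), c ⟨j+1, h1⟩ = d ⟨j+1, h1⟩ := by
    intro j h1
    have h2 := congrFun h ⟨j, by omega⟩
    rwa [shiftIn_coord_lt c _ ⟨j, by omega⟩ h1, shiftIn_coord_lt d _ ⟨j, by omega⟩ h1] at h2
  have hb : Psi sel c = Psi sel d := by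
    have h2 := congrFun h ⟨n-1, by omega⟩
    rwa [shiftIn_coord_last c _ ⟨n-1, by omega⟩ (by show ¬(n-1+1 < n); omega),
      shiftIn_coord_last d _ ⟨n-1, by omega⟩ (by show ¬(n-1+1 < n); omega)] at h2
  have hsh : shiftIn c 1 = shiftIn d 1 := by
    funext i
    by_cases hi : (i : ℕ) + 1 < n
    · rw [shiftIn_coord_lt c 1 i hi, shiftIn_coord_lt d 1 i hi]; exact hco _ _
    · rw [shiftIn_coord_last c 1 i hi, shiftIn_coord_last d 1 i hi]
  have hg1 : get c 1 = get d 1 := by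
    rw [get_eq c 1 (by omega), get_eq d 1 (by omega)]
    exact hco 0 (by omega)
  have hA : Acond sel c ↔ Acond sel d := by unfold Acond; rw [hsh, hg1]
  have hf : fPRR c = fPRR d := by
    by_cases hAc : Acond sel c
    · have h1 := Psi_pos hAc
      have h2 := Psi_pos (hA.mp hAc)
      rw [h1, h2] at hb
      exact add_right_cancel hb
    · rw [Psi_neg hAc, Psi_neg (fun hd => hAc (hA.mpr hd))] at hb
      exact hb
  have h1v : c ⟨1, by omega⟩ = d ⟨1, by omega⟩ := hco 0 (by omega)
  have hl : c ⟨n-1, by omega⟩ = d ⟨n-1, by omega⟩ := by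
    have h2 := hco (n-2) (by omega)
    have e : n - 2 + 1 = n - 1 := by omega
    simp only [e] at h2
    exact h2
  have h0 : c ⟨0, by omega⟩ = d ⟨0, by omega⟩ := by
    rw [fPRR_eval hn, fPRR_eval hn, h1v, hl] at hf
    exact add_right_cancel (add_right_cancel hf)
  funext i
  rcases Nat.eq_zero_or_pos (i : ℕ) with hi | hi
  · have he : i = ⟨0, by omega⟩ := Fin.ext hi
    rw [he]; exact h0
  · have hi2 : (i : ℕ) - 1 + 1 < n := by have := i.isLt; omega
    have he : i = ⟨(i : ℕ) - 1 + 1, hi2⟩ := Fin.ext (by show (i:ℕ) = (i:ℕ) - 1 + 1; omega)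
    rw [he]; exact hco _ _

lemma zero_orbit (hn : 3 ≤ n) {x : Fin n → F2} (h : inOrbit (sig n) x 0) : x = 0 := by
  obtain ⟨k, hk⟩ := inOrbit_symm (sig_inj hn) h
  rw [← hk, Function.iterate_fixed (sig_zero hn) k]

lemma notU (hn : 3 ≤ n) {sel : (Fin n → F2) → (Fin n → F2)}
    (hconst : ∀ v w, inOrbit (sig n) v w → sel v = sel w)
    {v z : Fin n → F2} (hs : Spec sel v) (horb : inOrbit (sig n) v z) (hza : z ≠ aSt v) :
    ¬ (Acond sel z ∧ fPRR z = 1) := by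
  rintro ⟨hA, hf⟩
  have hsz : sig n z = shiftIn z 1 := by rw [sig_eq_shiftIn, hf]
  have hs2 : Spec sel (shiftIn z 1) := A_to_Spec hn hA
  have horb2 : inOrbit (sig n) v (shiftIn z 1) := by
    rw [← hsz]
    exact inOrbit_trans horb ⟨1, Function.iterate_one (sig n) ▸ rfl⟩
  have he : shiftIn z 1 = v := (Spec_unique hn hconst hs hs2 horb2).symm
  have h2 : sig n z = sig n (aSt v) := by rw [hsz, he, sig_aSt hn v hs.1]
  exact hza (sig_inj hn h2)

lemma CD (hn : 3 ≤ n) {sel : (Fin n → F2) → (Fin n → F2)}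
    (hconst : ∀ v w, inOrbit (sig n) v w → sel v = sel w) :
    ∀ (N : ℕ) (x : Fin n → F2), 2^n - nu n x ≤ N → ¬(Acond sel x ∧ fPRR x = 1) →
      inOrbit (nextMap (Psi sel)) x (sig n x) := by
  intro N
  induction N with
  | zero =>
      intro x hx _
      have := nu_lt_pow x
      omega
  | succ N ih =>
      intro x hx hnotU
      by_cases hA : Acond sel x
      · rcases F2_cases (fPRR x) with hf | hf
        · -- fPRR x = 0 : down-edge
          have hs : Spec sel (shiftIn x 1) := A_to_Spec hn hA
          have htx : nextMap (Psi sel) x = shiftIn x 1 := by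
            rw [nextMap_eq_shiftIn, Psi_pos hA, hf, zero_add]
          have hsx : sig n x = compSt (shiftIn x 1) := by
            rw [sig_eq_shiftIn, hf, compSt_shiftIn]
          have hνx : nu n x < nu n (shiftIn x 1) := by
            have h1 : nu n x = nu n (compSt (shiftIn x 1)) := by
              rw [← hsx]
              exact nu_congr hn ⟨1, Function.iterate_one (sig n) ▸ rfl⟩
            have h2 := key hn hs
            omega
          have hva : inOrbit (sig n) (shiftIn x 1) (aSt (shiftIn x 1)) :=
            inOrbit_symm (sig_inj hn)
              ⟨1, by rw [Function.iterate_one]; exact sig_aSt hn _ hs.1⟩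
          have hP : ∃ j, (sig n)^[j] (shiftIn x 1) = aSt (shiftIn x 1) := hva
          have hwalk : inOrbit (nextMap (Psi sel)) (shiftIn x 1) (aSt (shiftIn x 1)) := by
            rw [← Nat.find_spec hP]
            apply orbit_chain
            intro i hij
            have hz : inOrbit (sig n) (shiftIn x 1) ((sig n)^[i] (shiftIn x 1)) := ⟨i, rfl⟩
            have hnz : nu n ((sig n)^[i] (shiftIn x 1)) = nu n (shiftIn x 1) :=
              (nu_congr hn hz).symm
            have hstep := ih ((sig n)^[i] (shiftIn x 1))
              (by have := nu_lt_pow (shiftIn x 1); omega)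
              (notU hn hconst hs hz (Nat.find_min hP hij))
            rw [Function.iterate_succ_apply']
            exact hstep
          have hta : nextMap (Psi sel) (aSt (shiftIn x 1)) = sig n x := by
            rw [tau_aSt hn hs, hsx]
          exact inOrbit_trans
            (inOrbit_trans ⟨1, by rw [Function.iterate_one]; exact htx⟩ hwalk)
            ⟨1, by rw [Function.iterate_one]; exact hta⟩
        · exact absurd ⟨hA, hf⟩ hnotU
      · exact ⟨1, by
          rw [Function.iterate_one, nextMap_eq_shiftIn, Psi_neg hA, ← sig_eq_shiftIn]⟩

lemma CU (hn : 3 ≤ n) {sel : (Fin n → F2) → (Fin n → F2)}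
    (hmem : ∀ v, sel v ∈ orbit (nextMap (n := n) fPRR) v)
    (hconst : ∀ v w, inOrbit (nextMap (n := n) fPRR) v w → sel v = sel w)
    (hval : ∀ v : Fin n → F2, v ≠ 0 →
      (∀ w ∈ orbit (nextMap (n := n) fPRR) v, get w 0 = get w (n - 1)) →
      get (sel v) 0 = 1 ∧ get (sel v) (n - 1) = 1) :
    ∀ (N : ℕ) (x : Fin n → F2), nu n x ≤ N → inOrbit (nextMap (Psi sel)) 0 x := by
  intro N
  induction N with
  | zero =>
      intro x hx
      obtain ⟨m, hmo, hmv⟩ := nu_exists x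
      have hm0 : m = 0 := val2_eq_zero (by omega)
      rw [hm0] at hmo
      rw [zero_orbit hn hmo]
      exact inOrbit_refl _ _
  | succ N ih =>
      intro x hx
      by_cases h0 : inOrbit (sig n) x 0
      · rw [zero_orbit hn h0]; exact inOrbit_refl _ _
      · -- find the special state v of x's cycle
        have hmain : ∀ v, inOrbit (sig n) x v → Spec sel v →
            inOrbit (nextMap (Psi sel)) 0 x := by
          intro v hvorb hspec
          have hb : nextMap (Psi sel) (bSt v) = v := tau_bSt hn hspec
          have hsb : sig n (bSt v) = compSt v := sig_bSt hn v hspec.1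
          have hν : nu n (bSt v) < nu n x := by
            have h1 : nu n (bSt v) = nu n (compSt v) := by
              rw [← hsb]
              exact nu_congr hn ⟨1, Function.iterate_one (sig n) ▸ rfl⟩
            have h2 := key hn hspec
            have h3 : nu n x = nu n v := nu_congr hn hvorb
            omega
          have h0b : inOrbit (nextMap (Psi sel)) 0 (bSt v) := ih (bSt v) (by omega)
          have h0v : inOrbit (nextMap (Psi sel)) 0 v :=
            inOrbit_trans h0b ⟨1, by rw [Function.iterate_one]; exact hb⟩
          obtain ⟨k, hk⟩ := inOrbit_symm (sig_inj hn) hvorb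
          have hva : inOrbit (sig n) v (aSt v) :=
            inOrbit_symm (sig_inj hn)
              ⟨1, by rw [Function.iterate_one]; exact sig_aSt hn v hspec.1⟩
          have hP : ∃ j, (sig n)^[j] v = aSt v := hva
          set j := Nat.find hP with hjdef
          have hperiod : (sig n)^[j+1] v = v := by
            rw [Function.iterate_succ_apply', Nat.find_spec hP]
            exact sig_aSt hn v hspec.1
          have hk' : (sig n)^[k % (j+1)] v = x := by
            rw [← hk]
            conv_rhs => rw [show k = k % (j+1) + (k/(j+1))*(j+1) from
              (Nat.mod_add_div' k (j+1)).symm]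
            rw [Function.iterate_add_apply, iterate_fix_mul hperiod]
          have hkj : k % (j+1) < j + 1 := Nat.mod_lt _ (by omega)
          have hwalk : inOrbit (nextMap (Psi sel)) v x := by
            rw [← hk']
            apply orbit_chain
            intro i hi
            have hz : inOrbit (sig n) v ((sig n)^[i] v) := ⟨i, rfl⟩
            have hstep := CD hn hconst (2^n) ((sig n)^[i] v)
              (by have := nu_lt_pow ((sig n)^[i] v); omega)
              (notU hn hconst hspec hz (Nat.find_min hP (by omega)))
            rw [Function.iterate_succ_apply']
            exact hstep
          exact inOrbit_trans h0v hwalk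
        rcases F2_cases (x ⟨0, by omega⟩ + x ⟨n-1, by omega⟩) with ht | ht
        · -- PCR cycle
          have hx0 : x ≠ 0 := by rintro rfl; exact h0 (inOrbit_refl _ _)
          have hPCRset : ∀ w ∈ orbit (sig n) x, get w 0 = get w (n - 1) := by
            intro w hw
            have h2 := typ_orbit hn hw
            rw [ht] at h2
            rw [get_eq w 0 (by omega), get_eq w (n-1) (by omega)]
            exact F2_add_eq_zero h2
          obtain ⟨hs0, hs1⟩ := hval x hx0 hPCRset
          exact hmain (sel x) (hmem x)
            ⟨hs1, Or.inr ⟨hs0, hconst x (sel x) (hmem x)⟩⟩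
        · -- CCR cycle
          obtain ⟨m, hmo, hmv⟩ := nu_exists x
          have hmin : ∀ w, inOrbit (sig n) x w → lexLe m w := by
            intro w hw
            apply lexLe_of_val2_le
            have := nu_le hw
            omega
          have hw0 : ∃ w, inOrbit (sig n) x w ∧ w ⟨0, by omega⟩ = 0 := by
            by_contra hcon
            push_neg at hcon
            have hall : ∀ (i : ℕ) (hi : i < n), x ⟨i, hi⟩ = 1 := by
              intro i hi
              have h2 := coord_head x i 0 hi
              simp only [Nat.zero_add, Function.iterate_zero_apply] at h2
              rw [h2]
              rcases F2_cases (((sig n)^[i] x) ⟨0, by omega⟩) with hz | hz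
              · exact absurd hz (hcon _ ⟨i, rfl⟩)
              · exact hz
            rw [hall 0 (by omega), hall (n-1) (by omega)] at ht
            exact absurd ht (by decide)
          obtain ⟨w, hworb, hwz⟩ := hw0
          have hm0 : m ⟨0, by omega⟩ = 0 := by
            have hle := hmin w hworb ⟨0, by omega⟩ (by
              intro i hilt
              exact absurd hilt (by
                intro hh
                have : (i : ℕ) < 0 := hh
                omega))
            rw [hwz] at hle
            exact F2_val_le_zero hle
          have hml : m ⟨n-1, by omega⟩ = 1 := by
            have h2 := typ_orbit hn hmo
            rw [ht, hm0] at h2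
            exact F2_zero_add_eq_one h2
          have hrep : isCycleRep (sig n) m := by
            intro w2 hw2
            exact hmin w2 (inOrbit_trans hmo hw2)
          exact hmain m hmo
            ⟨by rw [get_eq m (n-1) (by omega)]; exact hml,
             Or.inl ⟨by rw [get_eq m 0 (by omega)]; exact hm0, hrep⟩⟩

end FinalAux
/-- the generic successor rule `Ψ` (Theorem 3.1). Every nonzero PCR-type cycle
contains a state starting and ending in `1`; for every choice `sel` of such states
(one per cycle) the rule generates a de Bruijn sequence. -/
theorem generic_rule_Psi (n : ℕ) (hn : 3 ≤ n)
    (sel : (Fin n → F2) → (Fin n → F2))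
    (hmem : ∀ v, sel v ∈ orbit (nextMap (n := n) fPRR) v)
    (hconst : ∀ v w, inOrbit (nextMap (n := n) fPRR) v w → sel v = sel w)
    (hval : ∀ v : Fin n → F2, v ≠ 0 →
      (∀ w ∈ orbit (nextMap (n := n) fPRR) v, get w 0 = get w (n - 1)) →
      get (sel v) 0 = 1 ∧ get (sel v) (n - 1) = 1) :
    (∀ v : Fin n → F2, v ≠ 0 →
      (∀ w ∈ orbit (nextMap (n := n) fPRR) v, get w 0 = get w (n - 1)) →
      ∃ w ∈ orbit (nextMap (n := n) fPRR) v, get w 0 = 1 ∧ get w (n - 1) = 1) ∧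
    generatesDB (fun c : Fin n → F2 =>
      if (get c 1 = 0 ∧ isCycleRep (nextMap (n := n) fPRR) (shiftIn c 1)) ∨
         (get c 1 = 1 ∧ shiftIn c 1 = sel (shiftIn c 1))
      then fPRR c + 1 else fPRR c) := by
  constructor
  · intro v hv hP
    exact ⟨sel v, hmem v, hval v hv hP⟩
  · intro x y
    have hgen : ∀ z, inOrbit (nextMap (Psi sel)) 0 z :=
      fun z => CU hn hmem hconst hval (2^n) z (le_of_lt (nu_lt_pow z))
    exact inOrbit_trans (inOrbit_symm (tau_inj hn sel) (hgen x)) (hgen y)
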